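/- If m is a probability measure on ℝ with density f with respect to Lebesgue measure satisfying 0 ≤ f ≤ 1 and supported in [a,b], then b − a ≥ 1, the first moment α = ∫ x dm satisfies a + 1/2 ≤ α ≤ b − 1/2, and the variance satisfies ∫ x² dm − α² ≥ 1/12. -/

import Mathlib

open MeasureTheory intervalIntegral

/-- Integrability helper: if `f` is measurable, `0 ≤ f ≤ 1`, vanishes outside `[a,b]`,
and `g` is measurable with `|g| ≤ C` on `[a,b]` (`C ≥ 0`), then `g * f` is integrable. -/
lemma aux_integrable_mul (f : ℝ → ℝ) (a b : ℝ)
    (hmeas : Measurable f) (h0 : ∀ x, 0 ≤ f x) (h1 : ∀ x, f x ≤ 1)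
    (hsupp : ∀ x, x ∉ Set.Icc a b → f x = 0)
    (g : ℝ → ℝ) (hg : Measurable g) (C : ℝ) (hC0 : 0 ≤ C)
    (hC : ∀ x ∈ Set.Icc a b, |g x| ≤ C) :
    Integrable (fun x => g x * f x) := by
  have hind : Integrable ((Set.Icc a b).indicator (fun _ => C)) := by
    rw [integrable_indicator_iff measurableSet_Icc]
    exact integrableOn_const measure_Icc_lt_top.ne
  refine hind.mono' ((hg.mul hmeas).aestronglyMeasurable) (ae_of_all _ fun x => ?_)
  by_cases hx : x ∈ Set.Icc a b
  · rw [Set.indicator_of_mem hx]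
    have h2 := hC x hx
    have h3 := h0 x
    have h4 := h1 x
    rw [Real.norm_eq_abs, abs_mul, abs_of_nonneg h3]
    calc |g x| * f x ≤ C * 1 := by
          apply mul_le_mul h2 h4 h3 hC0
      _ = C := mul_one C
  · rw [Set.indicator_of_notMem hx, hsupp x hx, mul_zero, norm_zero]

/-- If `m` is a probability measure on `ℝ` with density `f` (w.r.t. Lebesgue measure)
satisfying `0 ≤ f ≤ 1` and supported in `[a,b]`, then `b - a ≥ 1`, the mean
`α = ∫ x f(x) dx` satisfies `a + 1/2 ≤ α ≤ b - 1/2`, and the variance satisfies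
`∫ x² f(x) dx - α² ≥ 1/12`. -/
theorem density_bounded_moment_bounds (f : ℝ → ℝ) (a b : ℝ)
    (hmeas : Measurable f) (h0 : ∀ x, 0 ≤ f x) (h1 : ∀ x, f x ≤ 1)
    (hsupp : ∀ x, x ∉ Set.Icc a b → f x = 0)
    (hprob : ∫ x, f x = 1) :
    1 ≤ b - a ∧
    a + 1 / 2 ≤ ∫ x, x * f x ∧
    (∫ x, x * f x) ≤ b - 1 / 2 ∧
    1 / 12 ≤ (∫ x, x ^ 2 * f x) - (∫ x, x * f x) ^ 2 := by
  -- basic integrabilities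
  set C : ℝ := max (|a|) (|b|) with hCdef
  have hC0 : 0 ≤ C := le_trans (abs_nonneg a) (le_max_left _ _)
  have habs : ∀ x ∈ Set.Icc a b, |x| ≤ C := fun x hx =>
    abs_le.2 ⟨le_trans (neg_le_neg (le_max_left (|a|) (|b|))) (le_trans (neg_abs_le a) hx.1),
      le_trans hx.2 (le_trans (le_abs_self b) (le_max_right _ _))⟩
  have hintf : Integrable f := by
    have := aux_integrable_mul f a b hmeas h0 h1 hsupp (fun _ => 1) measurable_const 1
      zero_le_one (fun x _ => by norm_num)
    simpa using this
  have hint1 : Integrable (fun x => x * f x) :=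
    aux_integrable_mul f a b hmeas h0 h1 hsupp (fun x => x) measurable_id C hC0 habs
  have hint2 : Integrable (fun x => x ^ 2 * f x) := by
    refine aux_integrable_mul f a b hmeas h0 h1 hsupp (fun x => x ^ 2) (by fun_prop)
      (C ^ 2) (by positivity) (fun x hx => ?_)
    rw [abs_pow]
    exact pow_le_pow_left₀ (abs_nonneg x) (habs x hx) 2
  -- a ≤ b
  have hab : a ≤ b := by
    by_contra hab
    push_neg at hab
    have : ∀ x, f x = 0 := fun x => hsupp x (by simp [Set.Icc_eq_empty_of_lt hab])
    simp [this] at hprob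
  -- Part 1 : 1 ≤ b - a
  have part1 : 1 ≤ b - a := by
    have hle : ∀ x, f x ≤ (Set.Icc a b).indicator (fun _ => (1 : ℝ)) x := by
      intro x
      by_cases hx : x ∈ Set.Icc a b
      · rw [Set.indicator_of_mem hx]; exact h1 x
      · rw [Set.indicator_of_notMem hx, hsupp x hx]
    have hindint : Integrable ((Set.Icc a b).indicator (fun _ => (1 : ℝ))) := by
      rw [integrable_indicator_iff measurableSet_Icc]
      exact integrableOn_const measure_Icc_lt_top.ne
    have := integral_mono hintf hindint hle
    rw [hprob, MeasureTheory.integral_indicator measurableSet_Icc,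
      setIntegral_const, smul_eq_mul, mul_one, measureReal_def, Real.volume_Icc,
      ENNReal.toReal_ofReal (by linarith)] at this
    exact this
  -- generic indicator integrability on an interval
  have hIcc_ind : ∀ (c d : ℝ) (g : ℝ → ℝ), Continuous g →
      Integrable ((Set.Icc c d).indicator g) := by
    intro c d g hg
    rw [integrable_indicator_iff measurableSet_Icc]
    exact hg.integrableOn_Icc
  -- Part 2 : a + 1/2 ≤ α
  have part2 : a + 1 / 2 ≤ ∫ x, x * f x := by
    have hpt : ∀ x, f x + (Set.Icc a (a + 1)).indicator (fun y => y - (a + 1)) x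
        ≤ (x - a) * f x := by
      intro x
      by_cases hx : x ∈ Set.Icc a (a + 1)
      · rw [Set.indicator_of_mem hx]
        have h2 := h0 x
        have h3 := h1 x
        nlinarith [hx.1, hx.2]
      · rw [Set.indicator_of_notMem hx]
        by_cases hs : x ∈ Set.Icc a b
        · have h2 := h0 x
          simp only [Set.mem_Icc, not_and, not_le] at hx
          have : a + 1 < x := hx hs.1
          nlinarith
        · rw [hsupp x hs]; simp
    have hR : Integrable (fun x => (x - a) * f x) :=
      aux_integrable_mul f a b hmeas h0 h1 hsupp (fun x => x - a) (by fun_prop)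
        (C + |a|) (by positivity) (fun x hx => by
          have := habs x hx
          calc |x - a| ≤ |x| + |a| := abs_sub _ _
            _ ≤ C + |a| := by linarith)
    have hL : Integrable (fun x => f x + (Set.Icc a (a + 1)).indicator (fun y => y - (a + 1)) x) :=
      hintf.add (hIcc_ind a (a + 1) _ (by fun_prop))
    have hmono := integral_mono hL hR hpt
    rw [integral_add hintf (hIcc_ind a (a + 1) _ (by fun_prop)), hprob,
      MeasureTheory.integral_indicator measurableSet_Icc,
      MeasureTheory.integral_Icc_eq_integral_Ioc,
      ← intervalIntegral.integral_of_le (by linarith : a ≤ a + 1),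
      integral_comp_sub_right (fun u => u) (a + 1), integral_id] at hmono
    have hsub : (∫ x, (x - a) * f x) = (∫ x, x * f x) - a := by
      have : (fun x => (x - a) * f x) = fun x => x * f x - a * f x := by
        funext x; ring
      rw [this, integral_sub hint1 (hintf.const_mul a), MeasureTheory.integral_const_mul, hprob, mul_one]
    rw [hsub] at hmono
    have : (1 : ℝ) + ((a + 1 - (a + 1)) ^ 2 - (a - (a + 1)) ^ 2) / 2 = 1 / 2 := by ring_nf
    nlinarith [hmono]
  -- Part 3 : α ≤ b - 1/2
  have part3 : (∫ x, x * f x) ≤ b - 1 / 2 := by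
    have hpt : ∀ x, f x + (Set.Icc (b - 1) b).indicator (fun y => (b - 1) - y) x
        ≤ (b - x) * f x := by
      intro x
      by_cases hx : x ∈ Set.Icc (b - 1) b
      · rw [Set.indicator_of_mem hx]
        have h2 := h0 x
        have h3 := h1 x
        nlinarith [hx.1, hx.2]
      · rw [Set.indicator_of_notMem hx]
        by_cases hs : x ∈ Set.Icc a b
        · have h2 := h0 x
          simp only [Set.mem_Icc, not_and, not_le] at hx
          have h5 : x < b - 1 := by
            by_contra h6
            push_neg at h6
            exact absurd (hx h6) (not_lt.2 hs.2)
          nlinarith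
        · rw [hsupp x hs]; simp
    have hR : Integrable (fun x => (b - x) * f x) :=
      aux_integrable_mul f a b hmeas h0 h1 hsupp (fun x => b - x) (by fun_prop)
        (|b| + C) (by positivity) (fun x hx => by
          have := habs x hx
          calc |b - x| ≤ |b| + |x| := abs_sub _ _
            _ ≤ |b| + C := by linarith)
    have hL : Integrable (fun x => f x + (Set.Icc (b - 1) b).indicator (fun y => (b - 1) - y) x) :=
      hintf.add (hIcc_ind (b - 1) b _ (by fun_prop))
    have hmono := integral_mono hL hR hpt
    rw [integral_add hintf (hIcc_ind (b - 1) b _ (by fun_prop)), hprob,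
      MeasureTheory.integral_indicator measurableSet_Icc,
      MeasureTheory.integral_Icc_eq_integral_Ioc,
      ← intervalIntegral.integral_of_le (by linarith : b - 1 ≤ b)] at hmono
    have hcomp : (∫ x in (b - 1)..b, ((b - 1) - x)) = -(1 / 2) := by
      rw [integral_sub (intervalIntegrable_const)
        ((Continuous.intervalIntegrable (by fun_prop) _ _ :
          IntervalIntegrable (fun x => x) volume _ _)), integral_id,
        intervalIntegral.integral_const]
      ring_nf
    rw [hcomp] at hmono
    have hsub : (∫ x, (b - x) * f x) = b - ∫ x, x * f x := by
      have : (fun x => (b - x) * f x) = fun x => b * f x - x * f x := by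
        funext x; ring
      rw [this, integral_sub (hintf.const_mul b) hint1, MeasureTheory.integral_const_mul, hprob, mul_one]
    rw [hsub] at hmono
    linarith
  -- Part 4 : variance ≥ 1/12
  refine ⟨part1, part2, part3, ?_⟩
  set α : ℝ := ∫ x, x * f x with hα
  have hpt : ∀ x, (1 / 4) * f x
      + (Set.Icc (α - 1 / 2) (α + 1 / 2)).indicator (fun y => (y - α) ^ 2 - 1 / 4) x
      ≤ (x - α) ^ 2 * f x := by
    intro x
    by_cases hx : x ∈ Set.Icc (α - 1 / 2) (α + 1 / 2)
    · rw [Set.indicator_of_mem hx]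
      have h2 := h0 x
      have h3 := h1 x
      have h6 : (x - α) ^ 2 ≤ 1 / 4 := by nlinarith [hx.1, hx.2]
      nlinarith [mul_nonneg (by linarith : (0:ℝ) ≤ 1 / 4 - (x - α) ^ 2)
        (by linarith : (0:ℝ) ≤ 1 - f x)]
    · rw [Set.indicator_of_notMem hx]
      have h2 := h0 x
      simp only [Set.mem_Icc, not_and, not_le] at hx
      have h5 : 1 / 4 ≤ (x - α) ^ 2 := by
        rcases le_or_gt (α - 1 / 2) x with h6 | h6
        · have := hx h6
          nlinarith
        · nlinarith
      nlinarith
  have hR : Integrable (fun x => (x - α) ^ 2 * f x) :=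
    aux_integrable_mul f a b hmeas h0 h1 hsupp (fun x => (x - α) ^ 2) (by fun_prop)
      ((C + |α|) ^ 2) (by positivity) (fun x hx => by
        have h6 := habs x hx
        rw [abs_pow]
        refine pow_le_pow_left₀ (abs_nonneg _) ?_ 2
        calc |x - α| ≤ |x| + |α| := abs_sub _ _
          _ ≤ C + |α| := by linarith)
  have hL : Integrable (fun x => (1 / 4) * f x
      + (Set.Icc (α - 1 / 2) (α + 1 / 2)).indicator (fun y => (y - α) ^ 2 - 1 / 4) x) :=
    (hintf.const_mul _).add (hIcc_ind _ _ _ (by fun_prop))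
  have hmono := integral_mono hL hR hpt
  rw [integral_add (hintf.const_mul _) (hIcc_ind _ _ _ (by fun_prop)),
    MeasureTheory.integral_const_mul, hprob, mul_one,
    MeasureTheory.integral_indicator measurableSet_Icc,
    MeasureTheory.integral_Icc_eq_integral_Ioc,
    ← intervalIntegral.integral_of_le (by linarith : α - 1 / 2 ≤ α + 1 / 2)] at hmono
  have hcomp : (∫ x in (α - 1 / 2)..(α + 1 / 2), ((x - α) ^ 2 - 1 / 4)) = -(1 / 6) := by
    rw [integral_sub ((Continuous.intervalIntegrable (by fun_prop) _ _ :
        IntervalIntegrable (fun x => (x - α) ^ 2) volume _ _))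
      (intervalIntegrable_const), intervalIntegral.integral_const,
      integral_comp_sub_right (fun u => u ^ 2) α, integral_pow]
    norm_num
  rw [hcomp] at hmono
  have hsub : (∫ x, (x - α) ^ 2 * f x) = (∫ x, x ^ 2 * f x) - α ^ 2 := by
    have heq : (fun x => (x - α) ^ 2 * f x)
        = fun x => x ^ 2 * f x - (2 * α) * (x * f x) + α ^ 2 * f x := by
      funext x; ring
    have hA : Integrable (fun x => x ^ 2 * f x - 2 * α * (x * f x)) :=
      hint2.sub (hint1.const_mul (2 * α))
    have hB : Integrable (fun x => α ^ 2 * f x) := hintf.const_mul (α ^ 2)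
    have hadd : (∫ x, (x ^ 2 * f x - 2 * α * (x * f x)) + α ^ 2 * f x)
        = (∫ x, x ^ 2 * f x - 2 * α * (x * f x)) + ∫ x, α ^ 2 * f x :=
      integral_add hA hB
    have hsubI : (∫ x, x ^ 2 * f x - 2 * α * (x * f x))
        = (∫ x, x ^ 2 * f x) - ∫ x, 2 * α * (x * f x) :=
      integral_sub hint2 (hint1.const_mul (2 * α))
    rw [heq, hadd, hsubI, MeasureTheory.integral_const_mul, MeasureTheory.integral_const_mul, hprob, mul_one, ← hα]
    ring
  rw [hsub] at hmono
  linarith
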